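/- Fix T > 0 and m ∈ ℝ. Define u : [0,T] × ℝ → ℝ by u(t,x) = ((e^{2T−t} − e^t) / (2(e^{2T−t} + e^t))) (x − m)². Then u solves the first-order Hamilton–Jacobi equation −∂_t u + (1/2)(∂_x u)² − (1/2)(x − m)² = 0 on [0,T] × ℝ with terminal condition u(T, x) = 0. -/

import Mathlib

open Real Set

/-- The function `u(t,x) = ((e^{2T-t} - e^t)/(2(e^{2T-t} + e^t))) (x-m)²` solves the
first-order HJ equation `-∂ₜu + (1/2)(∂ₓu)² - (1/2)(x-m)² = 0` with `u(T,·) = 0`. -/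
theorem closed_form_first_order_HJ
    (T : ℝ) (hT : 0 < T) (m : ℝ)
    (u : ℝ → ℝ → ℝ)
    (hu : ∀ t x, u t x =
      (Real.exp (2 * T - t) - Real.exp t) / (2 * (Real.exp (2 * T - t) + Real.exp t))
        * (x - m) ^ 2) :
    (∀ t ∈ Icc (0:ℝ) T, ∀ x : ℝ,
      -(deriv (fun τ => u τ x) t) + (1 / 2) * (deriv (fun y => u t y) x) ^ 2
        - (1 / 2) * (x - m) ^ 2 = 0) ∧
    ∀ x : ℝ, u T x = 0 := by
  constructor
  · intro t _ x
    have hA : (0:ℝ) < Real.exp (2 * T - t) := Real.exp_pos _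
    have hB : (0:ℝ) < Real.exp t := Real.exp_pos _
    have hS : Real.exp (2 * T - t) + Real.exp t ≠ 0 := by positivity
    -- derivative in x
    have hux : deriv (fun y => u t y) x =
        (Real.exp (2 * T - t) - Real.exp t) / (2 * (Real.exp (2 * T - t) + Real.exp t))
          * (2 * (x - m)) := by
      have heq : (fun y => u t y) = fun y =>
          (Real.exp (2 * T - t) - Real.exp t) / (2 * (Real.exp (2 * T - t) + Real.exp t))
            * (y - m) ^ 2 := funext fun y => hu t y
      rw [heq]
      have h1 : HasDerivAt (fun y : ℝ => (y - m) ^ 2) (2 * (x - m)) x := by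
        simpa using ((hasDerivAt_id x).sub_const m).fun_pow 2
      exact (h1.const_mul _).deriv
    -- derivative in t
    have hA' : HasDerivAt (fun τ => Real.exp (2 * T - τ)) (-Real.exp (2 * T - t)) t := by
      have h1 : HasDerivAt (fun τ : ℝ => 2 * T - τ) (-1) t := by
        simpa using (hasDerivAt_id t).const_sub (2 * T)
      simpa [mul_comm, Function.comp_def] using (Real.hasDerivAt_exp (2 * T - t)).comp t h1
    have hB' : HasDerivAt Real.exp (Real.exp t) t := Real.hasDerivAt_exp t
    have hnum : HasDerivAt (fun τ => Real.exp (2 * T - τ) - Real.exp τ)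
        (-Real.exp (2 * T - t) - Real.exp t) t := hA'.sub hB'
    have hden : HasDerivAt (fun τ => 2 * (Real.exp (2 * T - τ) + Real.exp τ))
        (2 * (-Real.exp (2 * T - t) + Real.exp t)) t := (hA'.add hB').const_mul 2
    have hdiv := (hnum.fun_div hden (by positivity)).mul_const ((x - m) ^ 2)
    have hut : deriv (fun τ => u τ x) t =
        -2 * Real.exp (2 * T - t) * Real.exp t
          / (Real.exp (2 * T - t) + Real.exp t) ^ 2 * (x - m) ^ 2 := by
      have heq : (fun τ => u τ x) = fun τ =>
          (Real.exp (2 * T - τ) - Real.exp τ) / (2 * (Real.exp (2 * T - τ) + Real.exp τ))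
            * (x - m) ^ 2 := funext fun τ => hu τ x
      rw [heq, hdiv.deriv]
      field_simp
      ring
    rw [hux, hut]
    field_simp
    ring
  · intro x
    rw [hu]
    simp [two_mul]
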